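/- The series Σ_{n=1}^{∞} Cat(n)·Fib(n)/8ⁿ converges and equals 4·(1 − 3/√10), where Cat(n) is the n-th Catalan number and Fib(n) is the n-th Fibonacci number. -/

import Mathlib

open Real Finset

lemma centralBinom_le_four_pow (n : ℕ) : Nat.centralBinom n ≤ 4 ^ n := by
  have h : Nat.centralBinom n ≤ ∑ m ∈ range (2 * n + 1), (2 * n).choose m := by
    apply Finset.single_le_sum (f := fun m => (2 * n).choose m) (fun i _ => Nat.zero_le _)
    simp only [Finset.mem_range]; omega
  rw [Nat.sum_range_choose] at h
  calc Nat.centralBinom n ≤ 2 ^ (2 * n) := h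
    _ = 4 ^ n := by rw [pow_mul]; norm_num

lemma cat_le_four_pow (n : ℕ) : catalan n ≤ 4 ^ n :=
  calc catalan n ≤ (n + 1) * catalan n := Nat.le_mul_of_pos_left _ (by omega)
    _ = Nat.centralBinom n := succ_mul_catalan_eq_centralBinom n
    _ ≤ 4 ^ n := centralBinom_le_four_pow n

lemma four_mul_cat_le {n : ℕ} (hn : 1 ≤ n) : 4 * catalan n ≤ 4 ^ n := by
  match n, hn with
  | 1, _ => simp
  | 2, _ => rw [catalan_two]; norm_num
  | (m + 3), _ =>
    calc 4 * catalan (m + 3) ≤ (m + 3 + 1) * catalan (m + 3) := by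
          apply Nat.mul_le_mul_right; omega
      _ = Nat.centralBinom (m + 3) := succ_mul_catalan_eq_centralBinom _
      _ ≤ 4 ^ (m + 3) := centralBinom_le_four_pow _

lemma summable_cat_norm {x : ℝ} (hx : |x| < 4⁻¹) :
    Summable (fun n => ‖(catalan n : ℝ) * x ^ n‖) := by
  apply Summable.of_norm_bounded (g := fun n => (4 * |x|) ^ n)
  · exact summable_geometric_of_lt_one (by positivity) (by linarith)
  · intro n
    rw [norm_norm, norm_mul, norm_pow, mul_pow]
    apply mul_le_mul _ le_rfl (by positivity) (by positivity)
    rw [Real.norm_natCast]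
    exact_mod_cast cat_le_four_pow n

lemma summable_cat {x : ℝ} (hx : |x| < 4⁻¹) :
    Summable (fun n => (catalan n : ℝ) * x ^ n) :=
  (summable_cat_norm hx).of_norm

lemma gf_eq {x : ℝ} (hx : |x| < 4⁻¹) :
    x * (∑' n, (catalan n : ℝ) * x ^ n) ^ 2 = (∑' n, (catalan n : ℝ) * x ^ n) - 1 := by
  set f : ℕ → ℝ := fun n => (catalan n : ℝ) * x ^ n with hf
  have hnorm := summable_cat_norm hx
  have key : (∑' n, f n) * (∑' n, f n) = ∑' n, ∑ k ∈ range (n + 1), f k * f (n - k) :=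
    tsum_mul_tsum_eq_tsum_sum_range_of_summable_norm hnorm hnorm
  have inner : ∀ n, (∑ k ∈ range (n + 1), f k * f (n - k)) = (catalan (n + 1) : ℝ) * x ^ n := by
    intro n
    have : (∑ k ∈ range (n + 1), f k * f (n - k))
        = ∑ k ∈ range (n + 1), ((catalan k : ℝ) * (catalan (n - k) : ℝ)) * x ^ n := by
      apply Finset.sum_congr rfl
      intro k hk
      rw [Finset.mem_range] at hk
      have hkn : k ≤ n := by omega
      simp only [hf]
      rw [show (catalan k : ℝ) * x ^ k * ((catalan (n - k) :ℝ) * x ^ (n - k))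
        = (catalan k : ℝ) * (catalan (n - k) : ℝ) * (x ^ k * x ^ (n - k)) by ring,
        ← pow_add, Nat.add_sub_cancel' hkn]
    rw [this, ← Finset.sum_mul]
    congr 1
    rw [catalan_succ' n, Nat.sum_antidiagonal_eq_sum_range_succ (fun a b => catalan a * catalan b)]
    push_cast
    rfl
  rw [tsum_congr inner] at key
  have hS : HasSum f (∑' n, f n) := (summable_cat hx).hasSum
  have hshift : HasSum (fun n => f (n + 1)) ((∑' n, f n) - 1) := by
    rw [hasSum_nat_add_iff 1]
    simpa [hf] using hS
  calc x * (∑' n, f n) ^ 2 = x * ((∑' n, f n) * (∑' n, f n)) := by ring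
    _ = x * ∑' n, (catalan (n + 1) : ℝ) * x ^ n := by rw [key]
    _ = ∑' n, x * ((catalan (n + 1) : ℝ) * x ^ n) := (tsum_mul_left).symm
    _ = ∑' n, f (n + 1) := by
        apply tsum_congr; intro n; simp only [hf]; ring
    _ = (∑' n, f n) - 1 := hshift.tsum_eq


lemma gf_value {x : ℝ} (hx : |x| < 4⁻¹) (hxne : x ≠ 0)
    (hsign : 2 * x * (∑' n, (catalan n : ℝ) * x ^ n) ≤ 1) :
    HasSum (fun n => (catalan n : ℝ) * x ^ n) ((1 - Real.sqrt (1 - 4 * x)) / (2 * x)) := by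
  set S := ∑' n, (catalan n : ℝ) * x ^ n with hSdef
  have h := gf_eq hx
  have hsq : (1 - 2 * x * S) ^ 2 = 1 - 4 * x := by linear_combination 4 * x * h
  have hrt : Real.sqrt (1 - 4 * x) = 1 - 2 * x * S := by
    rw [← hsq, Real.sqrt_sq (by linarith)]
  have hS : S = (1 - Real.sqrt (1 - 4 * x)) / (2 * x) := by
    rw [hrt]; field_simp; ring
  rw [← hS]
  exact (summable_cat hx).hasSum

lemma s5_lb : (2.2 : ℝ) < Real.sqrt 5 := by
  nlinarith [Real.sq_sqrt (by norm_num : (5:ℝ) ≥ 0), Real.sqrt_nonneg 5]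

lemma s5_ub : Real.sqrt 5 < 2.3 := by
  nlinarith [Real.sq_sqrt (by norm_num : (5:ℝ) ≥ 0), Real.sqrt_nonneg 5]

lemma pointA : HasSum (fun n => (catalan n : ℝ) * ((1 + Real.sqrt 5) / 16) ^ n)
    ((1 - Real.sqrt (1 - 4 * ((1 + Real.sqrt 5) / 16))) / (2 * ((1 + Real.sqrt 5) / 16))) := by
  have l5 := s5_lb; have u5 := s5_ub
  set x : ℝ := (1 + Real.sqrt 5) / 16 with hxdef
  have hxpos : 0 < x := by rw [hxdef]; linarith
  have hx : |x| < 4⁻¹ := by rw [abs_of_pos hxpos, hxdef]; norm_num; linarith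
  apply gf_value hx hxpos.ne'
  have h4x : 4 * x < 1 := by rw [hxdef]; linarith
  have hub : HasSum (fun n : ℕ => 1 / 4 * (4 * x) ^ n + if n = 0 then (3 : ℝ) / 4 else 0)
      (1 / 4 * (1 - 4 * x)⁻¹ + 3 / 4) := by
    have hg := (hasSum_geometric_of_lt_one (by positivity) h4x).mul_left (1 / 4 : ℝ)
    simpa using hg.add (hasSum_ite_eq 0 ((3 : ℝ) / 4))
  have hle : (∑' n, (catalan n : ℝ) * x ^ n) ≤ 1 / 4 * (1 - 4 * x)⁻¹ + 3 / 4 := by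
    apply hasSum_le _ (summable_cat hx).hasSum hub
    intro n
    match n with
    | 0 => norm_num
    | (k + 1) =>
      have h1 : (1 ≤ k + 1) := by omega
      have hc : (4 : ℝ) * (catalan (k + 1) : ℝ) ≤ 4 ^ (k + 1) := by
        exact_mod_cast four_mul_cat_le h1
      have hxp : (0:ℝ) ≤ x ^ (k + 1) := by positivity
      have : (catalan (k + 1) : ℝ) * x ^ (k + 1) ≤ 1 / 4 * (4 * x) ^ (k + 1) := by
        rw [mul_pow]
        nlinarith
      simpa using this
  have hden : (0:ℝ) < 1 - 4 * x := by linarith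
  have hub2 : 2 * x * (1 / 4 * (1 - 4 * x)⁻¹ + 3 / 4) ≤ 1 := by
    have h1 : 1 - 4 * x = (3 - Real.sqrt 5) / 4 := by rw [hxdef]; ring
    have h3 : (0:ℝ) < 3 - Real.sqrt 5 := by linarith
    rw [h1, hxdef, inv_div]
    have e : 1 / 4 * (4 / (3 - Real.sqrt 5)) + 3 / 4 = (4 + 3 * (3 - Real.sqrt 5)) / (4 * (3 - Real.sqrt 5)) := by
      field_simp
    rw [e, show (2:ℝ) * ((1 + Real.sqrt 5) / 16) = (1 + Real.sqrt 5) / 8 by ring,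
      div_mul_div_comm, div_le_one (by positivity)]
    nlinarith [Real.sq_sqrt (by norm_num : (5:ℝ) ≥ 0)]
  calc 2 * x * (∑' n, (catalan n : ℝ) * x ^ n)
      ≤ 2 * x * (1 / 4 * (1 - 4 * x)⁻¹ + 3 / 4) := by
        apply mul_le_mul_of_nonneg_left hle (by positivity)
    _ ≤ 1 := hub2

lemma pointB : HasSum (fun n => (catalan n : ℝ) * ((1 - Real.sqrt 5) / 16) ^ n)
    ((1 - Real.sqrt (1 - 4 * ((1 - Real.sqrt 5) / 16))) / (2 * ((1 - Real.sqrt 5) / 16))) := by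
  have l5 := s5_lb; have u5 := s5_ub
  set x : ℝ := (1 - Real.sqrt 5) / 16 with hxdef
  have hxneg : x < 0 := by rw [hxdef]; linarith
  have habs : |x| = (Real.sqrt 5 - 1) / 16 := by rw [abs_of_neg hxneg, hxdef]; ring
  have hx : |x| < 4⁻¹ := by rw [habs]; norm_num; linarith
  apply gf_value hx hxneg.ne
  have h4y : 4 * |x| < 1 := by rw [habs]; linarith
  have hlb : HasSum (fun n : ℕ => -(4 * |x|) ^ n + if n = 0 then (2 : ℝ) else 0)
      (-(1 - 4 * |x|)⁻¹ + 2) := by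
    have hg := (hasSum_geometric_of_lt_one (by positivity) h4y).neg
    simpa using hg.add (hasSum_ite_eq 0 (2 : ℝ))
  have hge : -(1 - 4 * |x|)⁻¹ + 2 ≤ (∑' n, (catalan n : ℝ) * x ^ n) := by
    apply hasSum_le _ hlb (summable_cat hx).hasSum
    intro n
    match n with
    | 0 => norm_num
    | (k + 1) =>
      have hc : (catalan (k + 1) : ℝ) ≤ 4 ^ (k + 1) := by exact_mod_cast cat_le_four_pow (k + 1)
      have key : -(4 * |x|) ^ (k + 1) ≤ (catalan (k + 1) : ℝ) * x ^ (k + 1) := by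
        have h1 : |(catalan (k + 1) : ℝ) * x ^ (k + 1)| ≤ (4 * |x|) ^ (k + 1) := by
          rw [abs_mul, abs_pow, mul_pow, Nat.abs_cast]
          apply mul_le_mul hc le_rfl (by positivity) (by positivity)
        linarith [neg_abs_le ((catalan (k + 1) : ℝ) * x ^ (k + 1))]
      simpa using key
  have hS0 : 0 ≤ (∑' n, (catalan n : ℝ) * x ^ n) := by
    have : (0:ℝ) ≤ -(1 - 4 * |x|)⁻¹ + 2 := by
      rw [habs]
      have hpos : (0:ℝ) < 1 - 4 * ((Real.sqrt 5 - 1) / 16) := by linarith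
      rw [inv_eq_one_div]
      have h2 : 1 / (1 - 4 * ((Real.sqrt 5 - 1) / 16)) ≤ 2 := by
        rw [div_le_iff₀ hpos]; linarith
      linarith
    linarith
  nlinarith [mul_nonneg hS0 (neg_nonneg.mpr hxneg.le)]

theorem catalan_fib_series :
    HasSum (fun n : ℕ => (catalan n : ℝ) * (Nat.fib n : ℝ) / 8 ^ n)
      (4 * (1 - 3 / Real.sqrt 10)) := by
  have l5 := s5_lb; have u5 := s5_ub
  have hs5 : Real.sqrt 5 ^ 2 = 5 := Real.sq_sqrt (by norm_num)
  have hs2 : Real.sqrt 2 ^ 2 = 2 := Real.sq_sqrt (by norm_num)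
  have hs2pos : (0:ℝ) < Real.sqrt 2 := Real.sqrt_pos.mpr (by norm_num)
  have h10 : Real.sqrt 10 = Real.sqrt 2 * Real.sqrt 5 := by
    rw [show (10:ℝ) = 2 * 5 by norm_num, Real.sqrt_mul (by norm_num)]
  have hrtA : Real.sqrt (1 - 4 * ((1 + Real.sqrt 5) / 16)) = (Real.sqrt 5 - 1) / (2 * Real.sqrt 2) := by
    rw [show (1 : ℝ) - 4 * ((1 + Real.sqrt 5) / 16) = ((Real.sqrt 5 - 1) / (2 * Real.sqrt 2)) ^ 2 by
      field_simp; nlinarith]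
    exact Real.sqrt_sq (div_nonneg (by linarith) (by positivity))
  have hrtB : Real.sqrt (1 - 4 * ((1 - Real.sqrt 5) / 16)) = (Real.sqrt 5 + 1) / (2 * Real.sqrt 2) := by
    rw [show (1 : ℝ) - 4 * ((1 - Real.sqrt 5) / 16) = ((Real.sqrt 5 + 1) / (2 * Real.sqrt 2)) ^ 2 by
      field_simp; nlinarith]
    exact Real.sqrt_sq (by positivity)
  have hA := pointA
  have hB := pointB
  rw [hrtA] at hA
  rw [hrtB] at hB
  have hfinal := (hA.sub hB).div_const (Real.sqrt 5)
  have hfun : (fun n : ℕ => (catalan n : ℝ) * (Nat.fib n : ℝ) / 8 ^ n)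
      = fun n : ℕ => ((catalan n : ℝ) * ((1 + Real.sqrt 5) / 16) ^ n
          - (catalan n : ℝ) * ((1 - Real.sqrt 5) / 16) ^ n) / Real.sqrt 5 := by
    funext n
    have e1 : ((1 + Real.sqrt 5) / 16 : ℝ) ^ n = ((1 + Real.sqrt 5) / 2) ^ n / 8 ^ n := by
      rw [← div_pow]; congr 1; ring
    have e2 : ((1 - Real.sqrt 5) / 16 : ℝ) ^ n = ((1 - Real.sqrt 5) / 2) ^ n / 8 ^ n := by
      rw [← div_pow]; congr 1; ring
    rw [Real.coe_fib_eq, e1, e2]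
    ring
  rw [hfun]
  convert hfinal using 1
  case e'_3 => rfl
  have hne1 : (1 + Real.sqrt 5 : ℝ) ≠ 0 := by linarith
  have hne2 : (1 - Real.sqrt 5 : ℝ) ≠ 0 := by linarith
  rw [h10]
  field_simp
  ring_nf
  linear_combination (-16 * Real.sqrt 2 * Real.sqrt 5 + 16) * hs5
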